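/- arXiv:math/0611077 — 4 statements merged into one kernel-verified Lean document; each statement's English description precedes it below -/
import Mathlib

section
/- The integer matrix L₁ with rows (7,6,3,2), (6,7,2,3), (3,2,2,0), (2,3,0,2) is positive definite, has determinant 1, and the associated bilinear form on ℤ⁴ is isomorphic (congruent over ℤ) to the standard form (identity matrix). -/
open Matrix
/-- The integer matrix `L₁` (the augmentation of `L` at `t = 2`). -/
def L1 : Matrix (Fin 4) (Fin 4) ℤ :=
  !![7, 6, 3, 2;
     6, 7, 2, 3;
     3, 2, 2, 0;
     2, 3, 0, 2]

/-- `L₁` is positive definite, has determinant 1, and is congruent over `ℤ`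
to the identity matrix (i.e. the associated bilinear form on `ℤ⁴` is
isomorphic to the standard form). -/
theorem stmt_1 :
    (∀ v : Fin 4 → ℤ, v ≠ 0 → 0 < v ⬝ᵥ L1.mulVec v) ∧
    L1.det = 1 ∧
    ∃ P : Matrix (Fin 4) (Fin 4) ℤ, IsUnit P.det ∧ P * L1 * Pᵀ = 1 := by
  refine ⟨?_, by decide, ?_⟩
  · intro v hv
    have key : v ⬝ᵥ L1.mulVec v =
        (-2*v 0 - v 1 - v 2)^2 + (v 0 + v 1 + v 2)^2 +
        (-v 0 - 2*v 1 - v 3)^2 + (v 0 + v 1 + v 3)^2 := by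
      simp [L1, dotProduct, Matrix.mulVec, Fin.sum_univ_four]
      ring
    rw [key]
    have h0 : 0 ≤ (-2*v 0 - v 1 - v 2)^2 + (v 0 + v 1 + v 2)^2 +
        (-v 0 - 2*v 1 - v 3)^2 + (v 0 + v 1 + v 3)^2 := by positivity
    rcases h0.lt_or_eq with h | h
    · exact h
    · exfalso
      have s1 := sq_nonneg (-2*v 0 - v 1 - v 2)
      have s2 := sq_nonneg (v 0 + v 1 + v 2)
      have s3 := sq_nonneg (-v 0 - 2*v 1 - v 3)
      have s4 := sq_nonneg (v 0 + v 1 + v 3)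
      have e1 : (-2*v 0 - v 1 - v 2)^2 = 0 := by linarith
      have e2 : (v 0 + v 1 + v 2)^2 = 0 := by linarith
      have e3 : (-v 0 - 2*v 1 - v 3)^2 = 0 := by linarith
      have e4 : (v 0 + v 1 + v 3)^2 = 0 := by linarith
      have f1 : -2*v 0 - v 1 - v 2 = 0 := by
        have := sq_eq_zero_iff.mp e1; exact this
      have f2 : v 0 + v 1 + v 2 = 0 := sq_eq_zero_iff.mp e2
      have f3 : -v 0 - 2*v 1 - v 3 = 0 := sq_eq_zero_iff.mp e3
      have f4 : v 0 + v 1 + v 3 = 0 := sq_eq_zero_iff.mp e4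
      have g0 : v 0 = 0 := by linarith
      have g1 : v 1 = 0 := by linarith
      have g2 : v 2 = 0 := by linarith
      have g3 : v 3 = 0 := by linarith
      apply hv
      funext i
      fin_cases i
      · exact g0
      · exact g1
      · exact g2
      · exact g3
  · exact ⟨!![-1,0,1,1; -1,0,2,1; 0,-1,1,1; 0,-1,1,2],
      by rw [show (!![(-1:ℤ),0,1,1; -1,0,2,1; 0,-1,1,1; 0,-1,1,2]).det = -1 by decide]
         exact isUnit_one.neg,
      by decide⟩
end

section
/- Fix n ≥ 1 and let Λₙ = ℤ[x]/(xⁿ−1). Define the hermitian form on Λₙ⁴ given by the matrix L obtained by substituting t = x + x⁻¹ into the matrix with rows (1+t+t², t+t², 1+t, t), (t+t², 1+t+t², t, 1+t), (1+t, t, 2, 0), (t, 1+t, 0, 2), where conjugation sends x to x⁻¹. Let Lₙ be the ℤ-valued symmetric bilinear form on Λₙ⁴ ≅ ℤ⁴ⁿ obtained by taking the coefficient of the identity (coefficient of x⁰) of the Λₙ-valued form. Then the vector w = N·(e₃+e₄), where N = 1 + x + ⋯ + xⁿ⁻¹, is a characteristic vector for Lₙ with Lₙ(w,w) = 4n. 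-/
noncomputable section

/-- `Λₙ = ℤ[x]/(xⁿ−1)`, realized as the group ring `ℤ[ℤ/n]`. -/
abbrev Lam (n : ℕ) := AddMonoidAlgebra ℤ (ZMod n)

/-- The monomial `x^d` in `Λₙ`. -/
def Xp (n : ℕ) (d : ℤ) : Lam n := AddMonoidAlgebra.single ((d : ZMod n)) 1

/-- The element `t = x + x⁻¹` of `Λₙ`. -/
def tn (n : ℕ) : Lam n := Xp n 1 + Xp n (-1)

/-- The matrix `L` over `Λₙ`, obtained by substituting `t = x + x⁻¹`. -/
def Lmat (n : ℕ) : Matrix (Fin 4) (Fin 4) (Lam n) :=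
  !![1 + tn n + tn n ^ 2, tn n + tn n ^ 2, 1 + tn n, tn n;
     tn n + tn n ^ 2, 1 + tn n + tn n ^ 2, tn n, 1 + tn n;
     1 + tn n, tn n, 2, 0;
     tn n, 1 + tn n, 0, 2]

/-- The involution of `Λₙ` sending `x` to `x⁻¹`. -/
def conj (n : ℕ) (f : Lam n) : Lam n := AddMonoidAlgebra.mapDomain (fun a => -a) f

/-- The `Λₙ`-valued hermitian form on `Λₙ⁴` given by the matrix `L`. -/
def herm (n : ℕ) (v w : Fin 4 → Lam n) : Lam n :=
  ∑ i, ∑ j, conj n (v i) * Lmat n i j * w j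

/-- The `ℤ`-valued symmetric bilinear form `Lₙ` on `Λₙ⁴ ≅ ℤ⁴ⁿ`:
the coefficient of the identity (`x⁰`) of the `Λₙ`-valued hermitian form. -/
def Ln (n : ℕ) (v w : Fin 4 → Lam n) : ℤ := (herm n v w).coeff 0

/-- The norm element `N = 1 + x + ⋯ + xⁿ⁻¹` of `Λₙ`. -/
def Nn (n : ℕ) : Lam n := ∑ d ∈ Finset.range n, AddMonoidAlgebra.single ((d : ZMod n)) (1 : ℤ)

/-- The standard `Λₙ`-basis vectors `e₁, e₂, e₃, e₄` of `Λₙ⁴`. -/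
def ee (n : ℕ) (i : Fin 4) : Fin 4 → Lam n := Pi.single i 1

/-- `w` is a characteristic vector for `Lₙ`. -/
def IsChar (n : ℕ) (w : Fin 4 → Lam n) : Prop :=
  ∀ v : Fin 4 → Lam n, (2 : ℤ) ∣ Ln n w v - Ln n v v

namespace St4

variable {n : ℕ}

/-- The augmentation (sum of coefficients). -/
def Sa (n : ℕ) : Lam n →+ ℤ := (Finsupp.liftAddHom (fun _ => AddMonoidHom.id ℤ)).comp
  (AddMonoidAlgebra.coeffAddEquiv (R := ℤ) (M := ZMod n)).toAddMonoidHom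

lemma Sa_single (a : ZMod n) (c : ℤ) : Sa n (AddMonoidAlgebra.single a c) = c :=
  Finsupp.sum_single_index (h := fun _ => AddMonoidHom.id ℤ) rfl

lemma conj_eq (f : Lam n) :
    conj n f = AddMonoidAlgebra.mapDomainRingHom ℤ (negAddMonoidHom (α := ZMod n)) f := rfl

lemma cmul (f g : Lam n) : conj n (f * g) = conj n f * conj n g := by
  simp [conj_eq, map_mul]

lemma cadd (f g : Lam n) : conj n (f + g) = conj n f + conj n g := by
  simp [conj_eq, map_add]

lemma cone : conj n (1 : Lam n) = 1 := by simp [conj_eq, AddMonoidAlgebra.one_def]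

lemma czero : conj n (0 : Lam n) = 0 := by simp [conj_eq]

lemma csingle (a : ZMod n) (c : ℤ) :
    conj n (AddMonoidAlgebra.single a c) = AddMonoidAlgebra.single (-a) c :=
  AddMonoidAlgebra.mapDomain_single

lemma cXp (d : ℤ) : conj n (Xp n d) = Xp n (-d) := by
  rw [Xp, csingle, Xp]; push_cast; ring_nf

lemma ctn : conj n (tn n) = tn n := by
  rw [tn, cadd, cXp, cXp, neg_neg, add_comm]

lemma Xp_mul (a b : ℤ) : Xp n a * Xp n b = Xp n (a + b) := by
  rw [Xp, Xp, Xp, AddMonoidAlgebra.single_mul_single, mul_one]; push_cast; ring_nf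

lemma Xp_zero : Xp n 0 = 1 := by
  rw [Xp, AddMonoidAlgebra.one_def]; norm_num

lemma mulconj_apply (f g : Lam n) :
    (conj n f * g).coeff 0 = ∑ a ∈ f.coeff.support, f.coeff a * g.coeff a := by
  induction g using AddMonoidAlgebra.induction_linear with
  | zero => simp
  | add g1 g2 h1 h2 =>
      rw [mul_add, AddMonoidAlgebra.coeff_add, Finsupp.add_apply, h1, h2, ← Finset.sum_add_distrib]
      exact Finset.sum_congr rfl fun a _ => (mul_add _ _ _).symm
  | single b c =>
      rw [AddMonoidAlgebra.coeff_mul_single_apply, zero_add, conj, AddMonoidAlgebra.coeff_mapDomain,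
        Finsupp.mapDomain_apply neg_injective]
      rw [Finset.sum_congr rfl (fun a _ => by rw [AddMonoidAlgebra.coeff_single, Finsupp.single_apply])]
      simp only [mul_ite, mul_zero]
      rw [Finset.sum_ite_eq]
      by_cases hb : b ∈ f.coeff.support
      · simp [hb]
      · simp [hb, Finsupp.notMem_support_iff.mp hb]

lemma mc_symm (f g : Lam n) : (conj n f * g).coeff 0 = (conj n g * f).coeff 0 := by
  rw [mulconj_apply, mulconj_apply]
  rw [Finset.sum_subset (Finset.subset_union_left (s₁ := f.coeff.support) (s₂ := g.coeff.support))
    (by intro a _ ha; simp [Finsupp.notMem_support_iff.mp ha])]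
  rw [Finset.sum_subset (Finset.subset_union_right (s₁ := f.coeff.support) (s₂ := g.coeff.support))
    (by intro a _ ha; simp [Finsupp.notMem_support_iff.mp ha])]
  exact Finset.sum_congr rfl fun a _ => mul_comm _ _

lemma L5 (f g c : Lam n) :
    (conj n f * (c * g)).coeff 0 = (conj n g * (conj n c * f)).coeff 0 := by
  rw [mc_symm, cmul]
  have h : conj n c * conj n g * f = conj n g * (conj n c * f) := by ring
  rw [h, mc_symm]

lemma P1 (f : Lam n) : ∃ b, (conj n f * f).coeff 0 = Sa n f + 2 * b := by
  have hS : Sa n f = ∑ a ∈ f.coeff.support, f.coeff a := rfl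
  have hd : (2:ℤ) ∣ (conj n f * f).coeff 0 - Sa n f := by
    rw [mulconj_apply, hS, ← Finset.sum_sub_distrib]
    apply Finset.dvd_sum
    intro a _
    have : f.coeff a * f.coeff a - f.coeff a = (f.coeff a - 1) * ((f.coeff a - 1) + 1) := by ring
    rw [this]
    exact (Int.even_mul_succ_self (f.coeff a - 1)).two_dvd
  obtain ⟨b, hb⟩ := hd
  exact ⟨b, by omega⟩

lemma Napply (hn : 1 ≤ n) (a : ZMod n) : (Nn n).coeff a = 1 := by
  haveI : NeZero n := ⟨by omega⟩
  rw [Nn, AddMonoidAlgebra.coeff_sum, Finsupp.finset_sum_apply, Finset.sum_eq_single a.val]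
  · simp [AddMonoidAlgebra.coeff_single, Finsupp.single_apply, ZMod.natCast_val, ZMod.cast_id]
  · intro d hd hne
    rw [AddMonoidAlgebra.coeff_single, Finsupp.single_apply, if_neg]
    intro h
    apply hne
    have := ZMod.val_cast_of_lt (Finset.mem_range.mp hd)
    rw [← h, this]
  · intro h
    exact absurd (Finset.mem_range.mpr a.val_lt) h

lemma Nmul (hn : 1 ≤ n) (h : Lam n) : (conj n (Nn n) * h).coeff 0 = Sa n h := by
  induction h using AddMonoidAlgebra.induction_linear with
  | zero => simp
  | add g1 g2 h1 h2 => rw [mul_add, AddMonoidAlgebra.coeff_add, Finsupp.add_apply, h1, h2, map_add]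
  | single b c =>
      rw [AddMonoidAlgebra.coeff_mul_single_apply, zero_add, conj, AddMonoidAlgebra.coeff_mapDomain,
        Finsupp.mapDomain_apply neg_injective, Napply hn, one_mul, Sa_single]

lemma Smul (f g : Lam n) : Sa n (f * g) = Sa n f * Sa n g := by
  induction f using AddMonoidAlgebra.induction_linear with
  | zero => simp
  | add f1 f2 h1 h2 => rw [add_mul, map_add, h1, h2, map_add, add_mul]
  | single a u =>
      induction g using AddMonoidAlgebra.induction_linear with
      | zero => simp
      | add g1 g2 h1 h2 => rw [mul_add, map_add, h1, h2, map_add, mul_add]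
      | single b v => rw [AddMonoidAlgebra.single_mul_single, Sa_single, Sa_single, Sa_single]

lemma SN : Sa n (Nn n) = n := by
  rw [Nn, map_sum]
  simp [Sa_single]

lemma Sa_one : Sa n (1 : Lam n) = 1 := by
  rw [AddMonoidAlgebra.one_def, Sa_single]

lemma Sa_Xp (d : ℤ) : Sa n (Xp n d) = 1 := by rw [Xp, Sa_single]

lemma Sa_tn : Sa n (tn n) = 2 := by rw [tn, map_add, Sa_Xp, Sa_Xp]; norm_num

lemma Sa_two : Sa n (2 : Lam n) = 2 := by
  rw [← one_add_one_eq_two, map_add, Sa_one]; norm_num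

lemma Lm00 : Lmat n 0 0 = 1 + tn n + tn n ^ 2 := rfl
lemma Lm01 : Lmat n 0 1 = tn n + tn n ^ 2 := rfl
lemma Lm02 : Lmat n 0 2 = 1 + tn n := rfl
lemma Lm03 : Lmat n 0 3 = tn n := rfl
lemma Lm10 : Lmat n 1 0 = tn n + tn n ^ 2 := rfl
lemma Lm11 : Lmat n 1 1 = 1 + tn n + tn n ^ 2 := rfl
lemma Lm12 : Lmat n 1 2 = tn n := rfl
lemma Lm13 : Lmat n 1 3 = 1 + tn n := rfl
lemma Lm20 : Lmat n 2 0 = 1 + tn n := rfl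
lemma Lm21 : Lmat n 2 1 = tn n := rfl
lemma Lm22 : Lmat n 2 2 = 2 := rfl
lemma Lm23 : Lmat n 2 3 = 0 := rfl
lemma Lm30 : Lmat n 3 0 = tn n := rfl
lemma Lm31 : Lmat n 3 1 = 1 + tn n := rfl
lemma Lm32 : Lmat n 3 2 = 0 := rfl
lemma Lm33 : Lmat n 3 3 = 2 := rfl

lemma herm_apply (v w : Fin 4 → Lam n) :
    Ln n v w = ∑ i, ∑ j, (conj n (v i) * Lmat n i j * w j).coeff 0 := by
  rw [Ln, herm, AddMonoidAlgebra.coeff_sum, Finsupp.finset_sum_apply]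
  exact Finset.sum_congr rfl fun i _ => by
    rw [AddMonoidAlgebra.coeff_sum, Finsupp.finset_sum_apply]

/-- conjugate-self entries commute between slots. -/
lemma offd (f g c : Lam n) (hc : conj n c = c) :
    (conj n f * c * g).coeff 0 = (conj n g * c * f).coeff 0 := by
  rw [mul_assoc, mul_assoc, L5, hc]

lemma ctn2 : conj n (tn n + tn n ^ 2) = tn n + tn n ^ 2 := by
  rw [cadd, pow_two, cmul, ctn, ← pow_two]

lemma c1tn : conj n (1 + tn n) = 1 + tn n := by
  rw [cadd, cone, ctn]

lemma tn_sq : tn n ^ 2 = Xp n 2 + 1 + 1 + Xp n (-2) := by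
  have h : tn n ^ 2 =
      Xp n 1 * Xp n 1 + Xp n 1 * Xp n (-1) + Xp n (-1) * Xp n 1 + Xp n (-1) * Xp n (-1) := by
    rw [tn]; ring
  rw [h, Xp_mul, Xp_mul, Xp_mul, Xp_mul]
  norm_num
  rw [Xp_zero]

lemma diag (f : Lam n) :
    ∃ b, ((conj n f * (1 + tn n + tn n ^ 2) * f : Lam n)).coeff 0 = Sa n f + 2 * b := by
  have hre : conj n f * (1 + tn n + tn n ^ 2) * f =
      (conj n f * f + (conj n f * f + conj n f * f)) +
      ((conj n f * (Xp n 1 * f) + conj n f * (Xp n (-1) * f)) +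
       (conj n f * (Xp n 2 * f) + conj n f * (Xp n (-2) * f))) := by
    rw [tn_sq, tn]
    ring
  have hA1 : (conj n f * (Xp n 1 * f)).coeff 0 = (conj n f * (Xp n (-1) * f)).coeff 0 := by
    rw [L5 f f (Xp n 1), cXp, mc_symm]
  have hA2 : (conj n f * (Xp n 2 * f)).coeff 0 = (conj n f * (Xp n (-2) * f)).coeff 0 := by
    rw [L5 f f (Xp n 2), cXp, mc_symm]
  obtain ⟨b, hb⟩ := P1 f
  refine ⟨Sa n f + 3 * b + (conj n f * (Xp n (-1) * f)).coeff 0 + (conj n f * (Xp n (-2) * f)).coeff 0, ?_⟩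
  rw [hre]
  repeat rw [AddMonoidAlgebra.coeff_add, Finsupp.add_apply]
  rw [hA1, hA2, hb]
  ring

end St4

open St4 in
/-- For `n ≥ 1`, the vector `w = N·(e₃+e₄)` is characteristic for `Lₙ`
and has norm `Lₙ(w,w) = 4n`. -/
theorem stmt_4 (n : ℕ) (hn : 1 ≤ n) :
    IsChar n (fun j => Nn n * (ee n 2 j + ee n 3 j)) ∧
    Ln n (fun j => Nn n * (ee n 2 j + ee n 3 j)) (fun j => Nn n * (ee n 2 j + ee n 3 j))
      = 4 * n := by
  have hw0 : Nn n * (ee n 2 0 + ee n 3 0) = 0 := by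
    simp [ee, Pi.single_apply]
  have hw1 : Nn n * (ee n 2 1 + ee n 3 1) = 0 := by
    simp [ee, Pi.single_apply]
  have hw2 : Nn n * (ee n 2 2 + ee n 3 2) = Nn n := by
    simp [ee, Pi.single_apply]
  have hw3 : Nn n * (ee n 2 3 + ee n 3 3) = Nn n := by
    simp [ee, Pi.single_apply]
  have hLw : ∀ v : Fin 4 → Lam n,
      Ln n (fun j => Nn n * (ee n 2 j + ee n 3 j)) v =
        5 * Sa n (v 0) + 5 * Sa n (v 1) + 2 * Sa n (v 2) + 2 * Sa n (v 3) := by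
    intro v
    have hz0 : ∀ c u : Lam n, ((conj n (0 : Lam n) * c * u : Lam n)).coeff 0 = 0 := by
      intro c u
      rw [St4.czero, zero_mul, zero_mul, AddMonoidAlgebra.coeff_zero, Finsupp.zero_apply]
    have key : ∀ c u : Lam n, ((conj n (Nn n) * c * u : Lam n)).coeff 0 = Sa n c * Sa n u := by
      intro c u
      rw [mul_assoc, St4.Nmul hn, St4.Smul]
    rw [herm_apply]
    rw [Fin.sum_univ_four]
    rw [Fin.sum_univ_four, Fin.sum_univ_four, Fin.sum_univ_four, Fin.sum_univ_four]
    simp only [hw0, hw1, hw2, hw3]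
    rw [Lm20, Lm21, Lm22, Lm23, Lm30, Lm31, Lm32, Lm33]
    rw [hz0, hz0, hz0, hz0, hz0, hz0, hz0, hz0]
    rw [key, key, key, key, key, key, key, key]
    rw [map_add, map_zero, Sa_one, Sa_tn, Sa_two]
    ring
  have hvv : ∀ v : Fin 4 → Lam n,
      ∃ k, Ln n v v = Sa n (v 0) + Sa n (v 1) + 2 * k := by
    intro v
    rw [herm_apply]
    rw [Fin.sum_univ_four]
    rw [Fin.sum_univ_four, Fin.sum_univ_four, Fin.sum_univ_four, Fin.sum_univ_four]
    rw [Lm00, Lm01, Lm02, Lm03, Lm10, Lm11, Lm12, Lm13,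
        Lm20, Lm21, Lm22, Lm23, Lm30, Lm31, Lm32, Lm33]
    obtain ⟨b0, hb0⟩ := diag (v 0)
    obtain ⟨b1, hb1⟩ := diag (v 1)
    have z1 : conj n (v 2) * (0 : Lam n) * v 3 = 0 := by ring
    have z2 : conj n (v 3) * (0 : Lam n) * v 2 = 0 := by ring
    have h22 : conj n (v 2) * 2 * v 2 = conj n (v 2) * v 2 + conj n (v 2) * v 2 := by ring
    have h33 : conj n (v 3) * 2 * v 3 = conj n (v 3) * v 3 + conj n (v 3) * v 3 := by ring
    rw [z1, z2, h22, h33, AddMonoidAlgebra.coeff_zero, Finsupp.zero_apply]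
    repeat rw [AddMonoidAlgebra.coeff_add, Finsupp.add_apply]
    rw [hb0, hb1]
    rw [offd (v 1) (v 0) _ ctn2, offd (v 2) (v 0) _ c1tn, offd (v 3) (v 0) _ ctn,
        offd (v 2) (v 1) _ ctn, offd (v 3) (v 1) _ c1tn]
    refine ⟨b0 + b1 + (conj n (v 0) * (tn n + tn n ^ 2) * v 1).coeff 0
      + ((conj n (v 0) * (1 + tn n) * v 2 : Lam n)).coeff 0 + (conj n (v 0) * tn n * v 3).coeff 0
      + (conj n (v 1) * tn n * v 2).coeff 0 + ((conj n (v 1) * (1 + tn n) * v 3 : Lam n)).coeff 0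
      + (conj n (v 2) * v 2).coeff 0 + (conj n (v 3) * v 3).coeff 0, ?_⟩
    ring
  constructor
  · intro v
    obtain ⟨k, hk⟩ := hvv v
    rw [hLw v, hk]
    have : (2:ℤ) ∣ 4 * Sa n (v 0) + 4 * Sa n (v 1) + 2 * Sa n (v 2) + 2 * Sa n (v 3) - 2 * k :=
      ⟨2 * Sa n (v 0) + 2 * Sa n (v 1) + Sa n (v 2) + Sa n (v 3) - k, by ring⟩
    convert this using 1
    ring
  · rw [hLw]
    simp only [hw0, hw1, hw2, hw3, map_zero, SN]
    ring

end
end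

section
/- For n = 2, the form L₂ on Λ₂⁴ ≅ ℤ⁸ (the coefficient-of-identity form of L over ℤ[x]/(x²−1)) is an odd positive definite unimodular form of rank 8, hence isomorphic to the standard form I₈. -/
noncomputable section

-- auxiliary layer
lemma conj2 (f : Lam 2) : conj 2 f = f := by
  unfold conj
  have h : (fun a : ZMod 2 => -a) = id := by funext a; fin_cases a <;> decide
  show AddMonoidAlgebra.ofCoeff (Finsupp.mapDomain _ f.coeff) = f
  rw [h, Finsupp.mapDomain_id]

lemma add_c (f g : Lam 2) (a : ZMod 2) : (f + g).coeff a = f.coeff a + g.coeff a := rfl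
lemma zero_c (a : ZMod 2) : (0 : Lam 2).coeff a = 0 := rfl
lemma smul_c (c : ℤ) (f : Lam 2) (a : ZMod 2) : (c • f).coeff a = c * f.coeff a := rfl

lemma single_c (b : ZMod 2) (c : ℤ) (a : ZMod 2) :
    (AddMonoidAlgebra.single b c).coeff a = if b = a then c else 0 := by
  rw [AddMonoidAlgebra.coeff_single, Finsupp.single_apply]

def s (c0 c1 : ℤ) : Lam 2 := AddMonoidAlgebra.single 0 c0 + AddMonoidAlgebra.single 1 c1

lemma s_c0 (c0 c1 : ℤ) : (s c0 c1).coeff 0 = c0 := by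
  simp [s, add_c, single_c, show ¬((1:ZMod 2) = 0) from by decide]
lemma s_c1 (c0 c1 : ℤ) : (s c0 c1).coeff 1 = c1 := by
  simp [s, add_c, single_c, show ¬((0:ZMod 2) = 1) from by decide]

lemma s_congr {a b a' b' : ℤ} (h1 : a = a') (h2 : b = b') : s a b = s a' b' := by
  rw [h1, h2]

lemma decomp (f : Lam 2) : s (f.coeff 0) (f.coeff 1) = f := by
  ext a; fin_cases a; exacts [s_c0 _ _, s_c1 _ _]

lemma mul_c0 (f g : Lam 2) : (f * g).coeff 0 = f.coeff 0 * g.coeff 0 + f.coeff 1 * g.coeff 1 := by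
  conv_lhs => rw [← decomp f, ← decomp g]
  simp only [s, add_mul, mul_add, AddMonoidAlgebra.single_mul_single, add_c, single_c,
    show ((0:ZMod 2)+0 = 0) from rfl, show ((0:ZMod 2)+1 = 1) from rfl,
    show ((1:ZMod 2)+0 = 1) from rfl, show ((1:ZMod 2)+1 = 0) from rfl]
  simp (config := { decide := true }) only [if_true, if_false,
    show ((0:ZMod 2) = 0) from rfl, show ((1:ZMod 2) = 1) from rfl]
  ring

lemma mul_c1 (f g : Lam 2) : (f * g).coeff 1 = f.coeff 0 * g.coeff 1 + f.coeff 1 * g.coeff 0 := by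
  conv_lhs => rw [← decomp f, ← decomp g]
  simp only [s, add_mul, mul_add, AddMonoidAlgebra.single_mul_single, add_c, single_c,
    show ((0:ZMod 2)+0 = 0) from rfl, show ((0:ZMod 2)+1 = 1) from rfl,
    show ((1:ZMod 2)+0 = 1) from rfl, show ((1:ZMod 2)+1 = 0) from rfl]
  simp (config := { decide := true }) only [if_true, if_false,
    show ((0:ZMod 2) = 0) from rfl, show ((1:ZMod 2) = 1) from rfl]
  ring

lemma one_c0 : (1 : Lam 2).coeff 0 = 1 := by
  rw [AddMonoidAlgebra.one_def]; simp [single_c]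
lemma one_c1 : (1 : Lam 2).coeff 1 = 0 := by
  rw [AddMonoidAlgebra.one_def]
  simp [single_c, show ¬((0:ZMod 2) = 1) from by decide]
lemma two_c0 : (2 : Lam 2).coeff 0 = 2 := by
  rw [show (2 : Lam 2) = 1 + 1 from one_add_one_eq_two.symm, add_c, one_c0]; norm_num
lemma two_c1 : (2 : Lam 2).coeff 1 = 0 := by
  rw [show (2 : Lam 2) = 1 + 1 from one_add_one_eq_two.symm, add_c, one_c1]; norm_num [one_c0]
lemma tn_c0 : (tn 2).coeff 0 = 0 := by
  unfold tn Xp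
  rw [add_c]
  simp [single_c, show ¬(((1:ℤ) : ZMod 2) = 0) from by decide,
    show ¬(((-1:ℤ) : ZMod 2) = 0) from by decide]
lemma tn_c1 : (tn 2).coeff 1 = 2 := by
  unfold tn Xp
  rw [add_c]
  simp [single_c, show (((1:ℤ) : ZMod 2) = 1) from by decide,
    show (((-1:ℤ) : ZMod 2) = 1) from by decide]

lemma cast_c0 (c : ℤ) : ((c : Lam 2)).coeff 0 = c := by
  rw [AddMonoidAlgebra.intCast_def]; simp [single_c]
lemma cast_c1 (c : ℤ) : ((c : Lam 2)).coeff 1 = 0 := by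
  rw [AddMonoidAlgebra.intCast_def]
  simp [single_c, show ¬((0:ZMod 2) = 1) from by decide]

def phiFun (v : Fin 4 → Lam 2) : Fin 8 → ℤ :=
  ![-((v 0).coeff 0) - (v 1).coeff 0 - (v 3).coeff 1,
    (v 0).coeff 0 + (v 1).coeff 0 + (v 1).coeff 1 + (v 3).coeff 1,
    -((v 0).coeff 1) - (v 1).coeff 1 - (v 3).coeff 0,
    (v 0).coeff 1 + (v 1).coeff 0 + (v 1).coeff 1 + (v 3).coeff 0,
    -((v 0).coeff 0) - (v 1).coeff 0 - (v 2).coeff 1,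
    (v 0).coeff 0 + (v 0).coeff 1 + (v 1).coeff 0 + (v 2).coeff 1,
    -((v 0).coeff 1) - (v 1).coeff 1 - (v 2).coeff 0,
    (v 0).coeff 0 + (v 0).coeff 1 + (v 1).coeff 1 + (v 2).coeff 0]

def psiFun (a : Fin 8 → ℤ) : Fin 4 → Lam 2 :=
  ![s (a 6 + a 7) (a 4 + a 5),
    s (a 2 + a 3) (a 0 + a 1),
    s (-(a 0) - a 1 - a 4 - a 5 - a 6) (-(a 2) - a 3 - a 4 - a 6 - a 7),
    s (-(a 0) - a 1 - a 2 - a 4 - a 5) (-(a 0) - a 2 - a 3 - a 6 - a 7)]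

lemma v8_4 (a0 a1 a2 a3 a4 a5 a6 a7 : ℤ) : ![a0,a1,a2,a3,a4,a5,a6,a7] (4 : Fin 8) = a4 := rfl
lemma v8_5 (a0 a1 a2 a3 a4 a5 a6 a7 : ℤ) : ![a0,a1,a2,a3,a4,a5,a6,a7] (5 : Fin 8) = a5 := rfl
lemma v8_6 (a0 a1 a2 a3 a4 a5 a6 a7 : ℤ) : ![a0,a1,a2,a3,a4,a5,a6,a7] (6 : Fin 8) = a6 := rfl
lemma v8_7 (a0 a1 a2 a3 a4 a5 a6 a7 : ℤ) : ![a0,a1,a2,a3,a4,a5,a6,a7] (7 : Fin 8) = a7 := rfl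

set_option maxHeartbeats 2000000 in
lemma key (v w : Fin 4 → Lam 2) : Ln 2 v w = ∑ p, phiFun v p * phiFun w p := by
  unfold Ln herm
  simp only [conj2, Lmat, pow_two, Fin.sum_univ_four, Fin.sum_univ_eight, phiFun,
    Matrix.cons_val', Matrix.cons_val_zero, Matrix.cons_val_one, Matrix.head_cons,
    Matrix.empty_val', Matrix.cons_val_fin_one, Matrix.head_fin_const, Matrix.of_apply,
    Matrix.cons_val_two, Matrix.cons_val_three, Matrix.tail_cons, v8_4, v8_5, v8_6, v8_7]
  simp only [add_c, mul_c0, mul_c1, tn_c0, tn_c1, one_c0, one_c1, two_c0, two_c1, zero_c]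
  ring


lemma psi_phi (v : Fin 4 → Lam 2) : psiFun (phiFun v) = v := by
  funext i
  fin_cases i <;>
    refine (s_congr ?_ ?_).trans (decomp _) <;>
      simp [phiFun, psiFun, v8_4, v8_5, v8_6, v8_7] <;> ring

lemma phi_psi (a : Fin 8 → ℤ) : phiFun (psiFun a) = a := by
  funext p
  fin_cases p <;>
    simp [phiFun, psiFun, s_c0, s_c1, v8_4, v8_5, v8_6, v8_7] <;> ring

set_option maxHeartbeats 2000000 in
def φL : (Fin 4 → Lam 2) →ₗ[ℤ] (Fin 8 → ℤ) where
  toFun := phiFun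
  map_add' v w := by
    funext p
    fin_cases p <;> simp [phiFun, add_c, v8_4, v8_5, v8_6, v8_7] <;> ring
  map_smul' c v := by
    funext p
    fin_cases p <;>
      simp [phiFun, mul_c0, mul_c1, cast_c0, cast_c1, v8_4, v8_5, v8_6, v8_7] <;> ring

def φE : (Fin 4 → Lam 2) ≃ₗ[ℤ] (Fin 8 → ℤ) :=
  { φL with invFun := psiFun, left_inv := psi_phi, right_inv := phi_psi }

lemma phiE_apply (v : Fin 4 → Lam 2) : φE v = phiFun v := rfl


/-- The form `L₂` on `Λ₂⁴ ≅ ℤ⁸` is odd, positive definite, and (being an odd positive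
definite unimodular form of rank 8) isomorphic to the standard form `I₈`. -/
theorem stmt_6 :
    (∃ v : Fin 4 → Lam 2, Odd (Ln 2 v v)) ∧
    (∀ v : Fin 4 → Lam 2, v ≠ 0 → 0 < Ln 2 v v) ∧
    ∃ φ : (Fin 4 → Lam 2) ≃ₗ[ℤ] (Fin 8 → ℤ),
      ∀ v w : Fin 4 → Lam 2, Ln 2 v w = ∑ i, φ v i * φ w i := by
  refine ⟨⟨ee 2 0, ?_⟩, ?_, ⟨φE, ?_⟩⟩
  · rw [key]
    simp [ee, phiFun, Pi.single_apply, one_c0, one_c1, zero_c, Fin.sum_univ_eight,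
      v8_4, v8_5, v8_6, v8_7]
    decide
  · intro v hv
    rw [key v v]
    have h : φE v ≠ 0 := by
      simpa using (LinearEquiv.map_ne_zero_iff φE).mpr hv
    obtain ⟨p, hp⟩ := Function.ne_iff.mp h
    exact Finset.sum_pos' (fun i _ => mul_self_nonneg _)
      ⟨p, Finset.mem_univ p, mul_self_pos.mpr (by simpa [phiE_apply] using hp)⟩
  · intro v w
    rw [key, phiE_apply, phiE_apply]


end
end

section
/- For any self-conjugate a ∈ ℤ[x,x⁻¹] (i.e. a(x) = a(x⁻¹)), the augmented integer matrix ε(L(a)) obtained by setting x = 1 in the matrix with rows (1+a+a², a+a², 1+a, a), (a+a², 1+a+a², a, 1+a), (1+a, a, 2, 0), (a, 1+a, 0, 2) is an odd positive definite unimodular matrix of rank 4, hence congruent over ℤ to the identity matrix. -/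
open Matrix

noncomputable section

/-- The Laurent polynomial ring `Λ = ℤ[x,x⁻¹]` as the group ring `ℤ[ℤ]`. -/
abbrev Lau := AddMonoidAlgebra ℤ ℤ

/-- The augmentation `ε : Λ → ℤ`, `x ↦ 1` (sum of coefficients). -/
def aug (a : Lau) : ℤ := Finsupp.sum a.coeff fun _ c => c

/-- The augmented matrix `ε(L(a))`, obtained by substituting `α = ε(a)` for `t`. -/
def epsLmat (α : ℤ) : Matrix (Fin 4) (Fin 4) ℤ :=
  !![1 + α + α ^ 2, α + α ^ 2, 1 + α, α;
     α + α ^ 2, 1 + α + α ^ 2, α, 1 + α;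
     1 + α, α, 2, 0;
     α, 1 + α, 0, 2]

lemma mul_fin_four' {R : Type*} [CommRing R]
    (a₁₁ a₁₂ a₁₃ a₁₄ a₂₁ a₂₂ a₂₃ a₂₄ a₃₁ a₃₂ a₃₃ a₃₄ a₄₁ a₄₂ a₄₃ a₄₄
     b₁₁ b₁₂ b₁₃ b₁₄ b₂₁ b₂₂ b₂₃ b₂₄ b₃₁ b₃₂ b₃₃ b₃₄ b₄₁ b₄₂ b₄₃ b₄₄ : R) :
    !![a₁₁, a₁₂, a₁₃, a₁₄; a₂₁, a₂₂, a₂₃, a₂₄; a₃₁, a₃₂, a₃₃, a₃₄; a₄₁, a₄₂, a₄₃, a₄₄] *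
    !![b₁₁, b₁₂, b₁₃, b₁₄; b₂₁, b₂₂, b₂₃, b₂₄; b₃₁, b₃₂, b₃₃, b₃₄; b₄₁, b₄₂, b₄₃, b₄₄] =
    !![a₁₁*b₁₁ + a₁₂*b₂₁ + a₁₃*b₃₁ + a₁₄*b₄₁, a₁₁*b₁₂ + a₁₂*b₂₂ + a₁₃*b₃₂ + a₁₄*b₄₂,
       a₁₁*b₁₃ + a₁₂*b₂₃ + a₁₃*b₃₃ + a₁₄*b₄₃, a₁₁*b₁₄ + a₁₂*b₂₄ + a₁₃*b₃₄ + a₁₄*b₄₄;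
       a₂₁*b₁₁ + a₂₂*b₂₁ + a₂₃*b₃₁ + a₂₄*b₄₁, a₂₁*b₁₂ + a₂₂*b₂₂ + a₂₃*b₃₂ + a₂₄*b₄₂,
       a₂₁*b₁₃ + a₂₂*b₂₃ + a₂₃*b₃₃ + a₂₄*b₄₃, a₂₁*b₁₄ + a₂₂*b₂₄ + a₂₃*b₃₄ + a₂₄*b₄₄;
       a₃₁*b₁₁ + a₃₂*b₂₁ + a₃₃*b₃₁ + a₃₄*b₄₁, a₃₁*b₁₂ + a₃₂*b₂₂ + a₃₃*b₃₂ + a₃₄*b₄₂,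
       a₃₁*b₁₃ + a₃₂*b₂₃ + a₃₃*b₃₃ + a₃₄*b₄₃, a₃₁*b₁₄ + a₃₂*b₂₄ + a₃₃*b₃₄ + a₃₄*b₄₄;
       a₄₁*b₁₁ + a₄₂*b₂₁ + a₄₃*b₃₁ + a₄₄*b₄₁, a₄₁*b₁₂ + a₄₂*b₂₂ + a₄₃*b₃₂ + a₄₄*b₄₂,
       a₄₁*b₁₃ + a₄₂*b₂₃ + a₄₃*b₃₃ + a₄₄*b₄₃, a₄₁*b₁₄ + a₄₂*b₂₄ + a₄₃*b₃₄ + a₄₄*b₄₄] := by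
  ext i j
  fin_cases i <;> fin_cases j <;>
    simp [Matrix.mul_apply, Fin.sum_univ_four]

lemma one_fin_four' {R : Type*} [CommRing R] :
    (1 : Matrix (Fin 4) (Fin 4) R) = !![1,0,0,0; 0,1,0,0; 0,0,1,0; 0,0,0,1] := by
  ext i j
  fin_cases i <;> fin_cases j <;> simp [Matrix.one_apply, Matrix.vecHead, Matrix.vecTail]

lemma key_id (α : ℤ) (v : Fin 4 → ℤ) :
    2 * (v ⬝ᵥ (epsLmat α).mulVec v) =
      (v 0)^2 + (v 1)^2 + ((1+α)*v 0 + α*v 1 + 2*v 2)^2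
        + (α*v 0 + (1+α)*v 1 + 2*v 3)^2 := by
  simp [epsLmat, dotProduct, mulVec, Fin.sum_univ_four]
  ring

lemma pos_lem (α : ℤ) (v : Fin 4 → ℤ) (hv : v ≠ 0) :
    0 < v ⬝ᵥ (epsLmat α).mulVec v := by
  have key := key_id α v
  by_contra h
  push_neg at h
  have h0 : v 0 = 0 := by
    nlinarith [sq_nonneg (v 0), sq_nonneg (v 1),
      sq_nonneg ((1+α)*v 0 + α*v 1 + 2*v 2), sq_nonneg (α*v 0 + (1+α)*v 1 + 2*v 3)]
  have h1 : v 1 = 0 := by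
    nlinarith [sq_nonneg (v 0), sq_nonneg (v 1),
      sq_nonneg ((1+α)*v 0 + α*v 1 + 2*v 2), sq_nonneg (α*v 0 + (1+α)*v 1 + 2*v 3)]
  rw [h0, h1] at key
  have h2 : v 2 = 0 := by nlinarith [sq_nonneg (v 2), sq_nonneg (v 3)]
  have h3 : v 3 = 0 := by nlinarith [sq_nonneg (v 2), sq_nonneg (v 3)]
  apply hv
  ext i
  fin_cases i <;> simp [h0, h1, h2, h3]

set_option maxHeartbeats 1600000 in
lemma cong_even (m : ℤ) :
    ∃ P : Matrix (Fin 4) (Fin 4) ℤ, IsUnit P.det ∧ P * epsLmat (m + m) * Pᵀ = 1 := by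
  refine ⟨!![1,0,-m,-m; 0,1,-m,-m; 1,0,-m-1,-m; 0,1,-m,-m-1], ?_, ?_⟩
  · apply Matrix.isUnit_det_of_left_inverse
      (B := !![1+m, m, -m, -m; m, 1+m, -m, -m; 1,0,-1,0; 0,1,0,-1])
    rw [mul_fin_four', one_fin_four']
    ext i j
    fin_cases i <;> fin_cases j <;> simp [Matrix.vecHead, Matrix.vecTail] <;> ring
  · have ht : (!![1,0,-m,-m; 0,1,-m,-m; 1,0,-m-1,-m; 0,1,-m,-m-1] : Matrix (Fin 4) (Fin 4) ℤ)ᵀ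
        = !![1,0,1,0; 0,1,0,1; -m,-m,-m-1,-m; -m,-m,-m,-m-1] := by
      ext i j; fin_cases i <;> fin_cases j <;> rfl
    rw [ht, epsLmat, mul_fin_four', mul_fin_four', one_fin_four']
    ext i j
    fin_cases i <;> fin_cases j <;> simp [Matrix.vecHead, Matrix.vecTail] <;> ring

set_option maxHeartbeats 1600000 in
lemma cong_odd (m : ℤ) :
    ∃ P : Matrix (Fin 4) (Fin 4) ℤ, IsUnit P.det ∧ P * epsLmat (2*m + 1) * Pᵀ = 1 := by
  refine ⟨!![1,0,-m-1,-m; 0,1,-m,-m-1; 1,0,-m-1,-m-1; 0,1,-m-1,-m-1], ?_, ?_⟩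
  · apply Matrix.isUnit_det_of_left_inverse
      (B := !![1+m, m+1, -m, -(m+1); m+1, 1+m, -(m+1), -m; 0,1,0,-1; 1,0,-1,0])
    rw [mul_fin_four', one_fin_four']
    ext i j
    fin_cases i <;> fin_cases j <;> simp [Matrix.vecHead, Matrix.vecTail] <;> ring
  · have ht : (!![1,0,-m-1,-m; 0,1,-m,-m-1; 1,0,-m-1,-m-1; 0,1,-m-1,-m-1]
        : Matrix (Fin 4) (Fin 4) ℤ)ᵀ
        = !![1,0,1,0; 0,1,0,1; -m-1,-m,-m-1,-m-1; -m,-m-1,-m-1,-m-1] := by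
      ext i j; fin_cases i <;> fin_cases j <;> rfl
    rw [ht, epsLmat, mul_fin_four', mul_fin_four', one_fin_four']
    ext i j
    fin_cases i <;> fin_cases j <;> simp [Matrix.vecHead, Matrix.vecTail] <;> ring

lemma cong_lem (α : ℤ) :
    ∃ P : Matrix (Fin 4) (Fin 4) ℤ, IsUnit P.det ∧ P * epsLmat α * Pᵀ = 1 := by
  rcases Int.even_or_odd α with ⟨m, hm⟩ | ⟨m, hm⟩
  · rw [hm]; exact cong_even m
  · rw [hm]; exact cong_odd m


/-- For any self-conjugate `a ∈ ℤ[x,x⁻¹]`, the augmented integer matrix `ε(L(a))`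
is odd, positive definite and unimodular of rank 4, hence congruent over `ℤ` to the
identity matrix. -/
theorem stmt_14 (a : Lau) (hconj : Finsupp.mapDomain (fun d : ℤ => -d) a.coeff = a.coeff) :
    (∃ v : Fin 4 → ℤ, Odd (v ⬝ᵥ (epsLmat (aug a)).mulVec v)) ∧
    (∀ v : Fin 4 → ℤ, v ≠ 0 → 0 < v ⬝ᵥ (epsLmat (aug a)).mulVec v) ∧
    IsUnit (epsLmat (aug a)).det ∧
    ∃ P : Matrix (Fin 4) (Fin 4) ℤ, IsUnit P.det ∧ P * epsLmat (aug a) * Pᵀ = 1 := by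
  set α := aug a with hα
  obtain ⟨P, hP, hPL⟩ := cong_lem α
  refine ⟨⟨![1,0,0,0], ?_⟩, fun v hv => pos_lem α v hv, ?_, ⟨P, hP, hPL⟩⟩
  · have hval : (![1,0,0,0] : Fin 4 → ℤ) ⬝ᵥ (epsLmat α).mulVec ![1,0,0,0] = 1 + α + α^2 := by
      simp [epsLmat, dotProduct, mulVec, Fin.sum_univ_four]
    rw [hval]
    obtain ⟨k, hk⟩ := Int.even_mul_succ_self α
    exact ⟨k, by nlinarith⟩
  · have hdet : P.det * (epsLmat α).det * P.det = 1 := by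
      have := congrArg Matrix.det hPL
      simpa [Matrix.det_mul, Matrix.det_transpose] using this
    exact IsUnit.of_mul_eq_one (P.det * P.det) (by linear_combination hdet)


end
end
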